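/- Let X be an infinite compact metrizable space and F a permutative cellular automaton on X^ℤ. Then the topological entropy of F is infinite. -/

import Mathlib

open scoped ENNReal Classical

section CADefs

variable {X : Type*}

/-- The one-dimensional cellular automaton on `X^ℤ` with local rule `f : X^I → X`:
`F((x_n)_n) = (f((x_{n+j})_{j∈I}))_n`. -/
def caMap (I : Finset ℤ) (f : (↥I → X) → X) : (ℤ → X) → (ℤ → X) :=
  fun x n => f fun j => x (n + (j : ℤ))

end CADefs

open Dynamics Set Function Uniformity UniformSpace Filter

set_option linter.unusedSectionVars false

section ShiftAux
variable {Y : Type*} [MetricSpace Y] [Infinite Y]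




lemma shift_iterate (j : ℕ) (u : ℕ → Y) :
    (fun (v : ℕ → Y) n => v (n+1))^[j] u = fun n => u (n + j) := by
  induction j with
  | zero => simp
  | succ j ih =>
    rw [Function.iterate_succ_apply', ih]
    funext n
    simp only [Function.comp_apply]
    congr 1
    omega

lemma shift_entropy_top :
    coverEntropy (fun (u : ℕ → Y) n => u (n+1)) Set.univ = ⊤ := by
  set T : (ℕ → Y) → (ℕ → Y) := fun u n => u (n+1) with hT
  rw [eq_top_iff]
  have key : ∀ k : ℕ, ENNReal.log k ≤ coverEntropy T Set.univ := by
    intro k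
    rcases Nat.eq_zero_or_pos k with hk | hk
    · simp [hk]
    -- embed k points
    obtain ⟨e⟩ : Nonempty (Fin k ↪ Y) := ⟨(Fin.valEmbedding).trans (Infinite.natEmbedding Y)⟩
    -- separation constant
    have hfin : Set.Finite {d : ℝ | ∃ i j : Fin k, i ≠ j ∧ d = dist (e i) (e j)} := by
      have : {d : ℝ | ∃ i j : Fin k, i ≠ j ∧ d = dist (e i) (e j)} ⊆
          (fun p : Fin k × Fin k => dist (e p.1) (e p.2)) '' Set.univ := by
        rintro d ⟨i, j, _, rfl⟩; exact ⟨(i,j), trivial, rfl⟩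
      exact (Set.finite_univ.image _).subset this
    by_cases hk2 : 2 ≤ k
    swap
    · -- k ≤ 1 : log k ≤ 0 ≤ entropy
      have hk1 : k = 1 := by omega
      subst hk1
      have h0 : ENNReal.log ((1:ℕ):ℝ≥0∞) = 0 := by norm_num
      rw [h0]
      exact coverEntropy_nonneg T ⟨fun _ => e 0, trivial⟩
    obtain ⟨i0, j0, hij0⟩ : ∃ i j : Fin k, i ≠ j := by
      refine ⟨⟨0, by omega⟩, ⟨1, by omega⟩, ?_⟩
      simp [Fin.ext_iff]
    set D := {d : ℝ | ∃ i j : Fin k, i ≠ j ∧ d = dist (e i) (e j)}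
    have hDne : D.Nonempty := ⟨_, i0, j0, hij0, rfl⟩
    obtain ⟨δ, hδD, hδmin⟩ := Set.Finite.exists_minimalFor id D hfin (by exact hDne)
    have hδpos : 0 < δ := by
      obtain ⟨i, j, hij, rfl⟩ := hδD
      exact dist_pos.2 (fun h => hij (e.injective h))
    have hδle : ∀ i j : Fin k, i ≠ j → δ ≤ dist (e i) (e j) := by
      intro i j hij
      by_contra h
      push_neg at h
      exact absurd (hδmin ⟨i, j, hij, rfl⟩ h.le) (not_le.2 h)
    -- entourages
    set U : Set (Y × Y) := {p | dist p.1 p.2 < δ/2} with hU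
    have hUmem : U ∈ 𝓤 Y := Metric.dist_mem_uniformity (by linarith)
    set V : Set ((ℕ → Y) × (ℕ → Y)) := (fun p : (ℕ → Y) × (ℕ → Y) => (p.1 0, p.2 0)) ⁻¹' U with hV
    have hVmem : V ∈ 𝓤 (ℕ → Y) := (Pi.uniformContinuous_proj (fun _ : ℕ => Y) 0) hUmem
    -- the net
    have hnet : ∀ n : ℕ, ((k:ℕ∞))^n ≤ netMaxcard T Set.univ V n := by
      intro n
      set c : (Fin n → Fin k) → (ℕ → Y) := fun w j => if h : j < n then e (w ⟨j, h⟩) else e i0 with hc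
      have hcinj : Function.Injective c := by
        intro w w' h
        funext j
        have := congrFun h (j : ℕ)
        simp only [hc, j.isLt, dif_pos, Fin.eta] at this
        exact e.injective this
      have hcard : (Finset.univ.image c).card = k ^ n := by
        rw [Finset.card_image_of_injective _ hcinj, Finset.card_univ]
        simp [Fintype.card_fun]
      have hdyn : IsDynNetIn T Set.univ V n (Finset.univ.image c : Finset (ℕ → Y)) := by
        constructor
        · exact fun _ _ => trivial
        · intro x hx y hy hxy
          simp only [Finset.coe_image, Finset.coe_univ, Set.image_univ, Set.mem_range] at hx hy
          obtain ⟨w, rfl⟩ := hx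
          obtain ⟨w', rfl⟩ := hy
          have hw : w ≠ w' := fun h => hxy (by rw [h])
          obtain ⟨j, hj⟩ : ∃ j, w j ≠ w' j := by
            by_contra h; push_neg at h; exact hw (funext h)
          refine Set.disjoint_left.2 (fun z hz hz' => ?_)
          have hz1 : (c w, z) ∈ dynEntourage T V n := hz
          have hz2 : (c w', z) ∈ dynEntourage T V n := hz'
          rw [mem_dynEntourage] at hz1 hz2
          have h1 := hz1 j j.isLt
          have h2 := hz2 j j.isLt
          have hTj : ∀ u : ℕ → Y, T^[(j:ℕ)] u = fun n => u (n + j) := shift_iterate (j:ℕ)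
          rw [hTj, hTj] at h1 h2
          simp only [hV, hU, mem_preimage, mem_setOf_eq, hc] at h1 h2
          simp only [Nat.zero_add, j.isLt, dif_pos, Fin.eta] at h1 h2
          have hsep : δ ≤ dist (e (w j)) (e (w' j)) := hδle _ _ hj
          have htri := dist_triangle (e (w j)) (z ((j:ℕ))) (e (w' j))
          rw [dist_comm (e (w' j)) (z (j:ℕ))] at h2
          linarith
      calc ((k:ℕ∞))^n = ((Finset.univ.image c).card : ℕ∞) := by
            rw [hcard]; simp
        _ ≤ netMaxcard T Set.univ V n := IsDynNetIn.card_le_netMaxcard hdyn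
    -- entropy bound
    have hband : ENNReal.log k ≤ netEntropyEntourage T Set.univ V := by
      rw [netEntropyEntourage]
      apply Filter.le_limsup_of_frequently_le'
      rw [Filter.frequently_atTop]
      intro a
      refine ⟨max a 1, le_max_left a 1, ?_⟩
      set n := max a 1 with hndef
      have hn : 1 ≤ n := le_max_right a 1
      have hnR : ((n:EReal)) ≠ 0 := by
        have : (n:ℕ) ≠ 0 := by omega
        exact_mod_cast this
      have hnRb : ((n:EReal)) ≠ ⊥ := EReal.natCast_ne_bot n
      have hnRt : ((n:EReal)) ≠ ⊤ := EReal.natCast_ne_top n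
      have h2 : ENNReal.log ((k:ℝ≥0∞)^n) ≤ ENNReal.log ((netMaxcard T Set.univ V n : ℕ∞) : ℝ≥0∞) := by
        apply ENNReal.log_monotone
        have := hnet n
        have hcast : (((k:ℕ∞)^n : ℕ∞) : ℝ≥0∞) ≤ ((netMaxcard T Set.univ V n : ℕ∞) : ℝ≥0∞) :=
          ENat.toENNReal_mono this
        calc (k:ℝ≥0∞)^n = (((k:ℕ∞)^n : ℕ∞) : ℝ≥0∞) := by
              rw [ENat.toENNReal_pow]; norm_cast
          _ ≤ _ := hcast
      have h3 : ENNReal.log ((k:ℝ≥0∞)^n) / (n:EReal) = ENNReal.log k := by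
        rw [ENNReal.log_pow, ← EReal.mul_div_right, EReal.div_self hnRb hnRt hnR, one_mul]
      calc ENNReal.log (k:ℝ≥0∞) = ENNReal.log ((k:ℝ≥0∞)^n) / (n:EReal) := h3.symm
        _ ≤ _ := EReal.div_le_div_right_of_nonneg (Nat.cast_nonneg' n) h2
    exact hband.trans (netEntropyEntourage_le_coverEntropy T Set.univ hVmem)
  -- conclude
  have hsup : (⨆ k : ℕ, ENNReal.log k) = (⊤ : EReal) := by
    rw [iSup_eq_top]
    intro b hb
    obtain ⟨x, hx⟩ := ENNReal.log_surjective b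
    have hxt : x ≠ ⊤ := by
      rintro rfl
      rw [ENNReal.log_top] at hx
      exact hb.ne hx.symm
    obtain ⟨m, hm⟩ := ENNReal.exists_nat_gt hxt
    exact ⟨m, hx ▸ ENNReal.log_strictMono hm⟩
  rw [← hsup]
  exact iSup_le key

end ShiftAux

section Core
variable {X : Type*} [Nonempty X] (I : Finset ℤ) (f : (↥I → X) → X)
  (m : ℤ) (hmI : m ∈ I) (hmax : ∀ j ∈ I, j ≤ m) (hmpos : 0 < m)

lemma ca_local {x y : ℤ → X} {n : ℤ} (h : ∀ j ∈ I, x (n + j) = y (n + j)) :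
    caMap I f x n = caMap I f y n := by
  unfold caMap
  congr 1
  funext j
  exact h j j.2

include hmax in
lemma ca_iter_local (t : ℕ) (x y : ℤ → X) (n : ℤ)
    (h : ∀ p : ℤ, p ≤ n + t * m → x p = y p) :
    (caMap I f)^[t] x n = (caMap I f)^[t] y n := by
  induction t generalizing n x y with
  | zero => exact h n (by simp)
  | succ t ih =>
    rw [Function.iterate_succ_apply, Function.iterate_succ_apply]
    refine ih (caMap I f x) (caMap I f y) n (fun p hp => ?_)
    refine ca_local I f (fun j hj => ?_)
    refine h _ ?_
    have hjm := hmax j hj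
    push_cast
    linarith

include hmax in
lemma ca_iter_surj
    (hsurj : ∀ u : ↥I → X, Function.Surjective fun a : X => f (Function.update u ⟨m, hmI⟩ a)) :
    ∀ t : ℕ, 1 ≤ t → ∀ (x : ℤ → X) (n : ℤ),
    Function.Surjective (fun a : X => (caMap I f)^[t] (Function.update x (n + t * m) a) n) := by
  intro t ht
  induction t, ht using Nat.le_induction with
  | base =>
    intro x n
    have key : ∀ a : X, (caMap I f)^[1] (Function.update x (n + ((1:ℕ):ℤ) * m) a) n
        = f (Function.update (fun j : ↥I => x (n + (j:ℤ))) ⟨m, hmI⟩ a) := by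
      intro a
      rw [Function.iterate_one]
      unfold caMap
      congr 1
      funext j
      rw [Function.update_apply, Function.update_apply]
      by_cases hj : j = (⟨m, hmI⟩ : ↥I)
      · rw [if_pos hj, if_pos]
        rw [hj]; push_cast; ring
      · rw [if_neg hj, if_neg]
        intro hc
        apply hj
        apply Subtype.ext
        have : n + (j:ℤ) = n + ((1:ℕ):ℤ)*m := hc
        push_cast at this
        simp only []
        linarith
    simp only [key]
    exact hsurj _
  | succ t ht ih =>
    intro x n
    set N : ℤ := n + (t+1 : ℕ) * m with hN
    have hNeq : N = (n + m) + (t:ℕ) * m := by push_cast [hN]; ring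
    have key : ∀ a : X, (caMap I f)^[t+1] (Function.update x N a) n
        = f (Function.update (fun j : ↥I => (caMap I f)^[t] x (n + (j:ℤ))) ⟨m, hmI⟩
            ((caMap I f)^[t] (Function.update x ((n + m) + (t:ℕ) * m) a) (n + m))) := by
      intro a
      rw [Function.iterate_succ_apply']
      show f _ = _
      congr 1
      funext j
      rw [Function.update_apply]
      by_cases hj : j = (⟨m, hmI⟩ : ↥I)
      · rw [if_pos hj, hj]
        rw [← hNeq]
      · rw [if_neg hj]
        have hjlt : (j:ℤ) < m := lt_of_le_of_ne (hmax j j.2) (fun hc => hj (Subtype.ext hc))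
        refine ca_iter_local I f m hmax t _ _ _ (fun p hp => ?_)
        rw [Function.update_apply, if_neg]
        intro hc
        rw [hc, hN] at hp
        push_cast at hp
        linarith
    simp only [key]
    exact (hsurj _).comp (ih x (n + m))
end Core

section Main
variable {X : Type*} [MetricSpace X] [CompactSpace X] [Infinite X]

lemma caMap_continuous (I : Finset ℤ) (f : (↥I → X) → X) (hf : Continuous f) :
    Continuous (caMap I f) :=
  continuous_pi fun _ => hf.comp (continuous_pi fun _ => continuous_apply _)

lemma ca_core (I : Finset ℤ) (f : (↥I → X) → X) (hf : Continuous f)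
    (m : ℤ) (hmI : m ∈ I) (hmax : ∀ j ∈ I, j ≤ m) (hmpos : 0 < m)
    (hsurj : ∀ u : ↥I → X, Function.Surjective fun a : X => f (Function.update u ⟨m, hmI⟩ a)) :
    coverEntropy (caMap I f) Set.univ = ⊤ := by
  set F := caMap I f with hF
  set M : ℕ := m.toNat with hMdef
  have hM : (M : ℤ) = m := Int.toNat_of_nonneg hmpos.le
  have hM1 : 1 ≤ M := by omega
  have hMpos : 0 < M := hM1
  haveI : Infinite (Fin M → X) := by
    haveI : Nonempty (Fin M) := ⟨⟨0, hMpos⟩⟩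
    infer_instance
  set ψ : (ℤ → X) → (ℕ → Fin M → X) := fun x t i => F^[t] x ((i:ℤ)+1) with hψ
  have hsemi : Function.Semiconj ψ F (fun u n => u (n+1)) := by
    intro x
    funext t i
    show F^[t] (F x) ((i:ℤ)+1) = F^[t+1] x ((i:ℤ)+1)
    rw [Function.iterate_succ_apply]
  have hcont : Continuous ψ := by
    refine continuous_pi fun t => continuous_pi fun i => ?_
    exact (continuous_apply _).comp ((caMap_continuous I f hf).iterate t)
  have hUC : UniformContinuous ψ := CompactSpace.uniformContinuous_of_continuous hcont
  -- surjectivity of ψ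
  have hψsurj : Function.Surjective ψ := by
    intro a
    obtain ⟨c⟩ : Nonempty X := inferInstance
    set base : ℤ → X := fun p =>
      if h : 1 ≤ p ∧ p ≤ (M:ℤ) then a 0 ⟨(p-1).toNat, by omega⟩ else c with hbase
    set pos : ℕ → ℤ := fun s => (M:ℤ) + 1 + (s:ℤ) with hpos
    have hpos_eq : ∀ s : ℕ, pos s = (((s % M : ℕ):ℤ)+1) + ((s / M + 1 : ℕ):ℤ) * m := by
      intro s
      have hdm : (M:ℤ) * ((s / M : ℕ) : ℤ) + ((s % M : ℕ) : ℤ) = (s:ℤ) := by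
        exact_mod_cast Nat.div_add_mod s M
      have hc1 : ((s / M + 1 : ℕ):ℤ) = ((s / M : ℕ):ℤ) + 1 := by exact_mod_cast rfl
      simp only [hpos]
      rw [← hM, hc1]
      linear_combination -hdm
    have hspec : ∀ (s : ℕ) (xs : ℤ → X), ∃ a' : X,
        F^[s / M + 1] (Function.update xs (pos s) a') (((s % M : ℕ):ℤ)+1)
          = a (s / M + 1) ⟨s % M, Nat.mod_lt s hMpos⟩ := by
      intro s xs
      have := ca_iter_surj I f m hmI hmax hsurj (s / M + 1) (Nat.le_add_left 1 _)
        xs (((s % M : ℕ):ℤ)+1)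
      obtain ⟨a', ha'⟩ := this (a (s / M + 1) ⟨s % M, Nat.mod_lt s hMpos⟩)
      exact ⟨a', by rw [hpos_eq s]; exact ha'⟩
    set seq : ℕ → (ℤ → X) := fun s => Nat.rec base
      (fun s' xs => Function.update xs (pos s') (Classical.choose (hspec s' xs))) s with hseq
    have hseq_succ : ∀ s : ℕ, seq (s+1)
        = Function.update (seq s) (pos s) (Classical.choose (hspec s (seq s))) := fun s => rfl
    have hagree : ∀ (s s' : ℕ), s ≤ s' → ∀ p : ℤ, p ≤ (M:ℤ) + s → seq s' p = seq s p := by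
      intro s s' hss'
      induction s', hss' using Nat.le_induction with
      | base => intro p _; rfl
      | succ s' hs' ih =>
        intro p hp
        rw [hseq_succ s', Function.update_apply, if_neg, ih p hp]
        simp only [hpos]
        omega
    set x : ℤ → X := fun p => seq (p - (M:ℤ)).toNat p with hx
    have hxs : ∀ (s : ℕ) (p : ℤ), p ≤ (M:ℤ) + s → x p = seq s p := by
      intro s p hp
      have h1 : (p - (M:ℤ)).toNat ≤ s := by omega
      have h2 : p ≤ (M:ℤ) + ((p - (M:ℤ)).toNat : ℤ) := by omega
      exact (hagree _ _ h1 p h2).symm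
    refine ⟨x, ?_⟩
    funext t i
    show F^[t] x ((i:ℤ)+1) = a t i
    match t with
    | 0 =>
      have hiM : ((i:ℕ):ℤ) + 1 ≤ (M:ℤ) + (0:ℕ) := by
        have := i.isLt; omega
      rw [Function.iterate_zero_apply, hxs 0 _ hiM]
      show base _ = a 0 i
      simp only [hbase]
      have hcond : 1 ≤ ((i:ℕ):ℤ) + 1 ∧ ((i:ℕ):ℤ) + 1 ≤ (M:ℤ) := by
        have := i.isLt; omega
      rw [dif_pos hcond]
      congr 1
      apply Fin.ext
      show (((i:ℕ):ℤ) + 1 - 1).toNat = (i:ℕ)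
      omega
    | (t'+1) =>
      set s : ℕ := (i:ℕ) + M * t' with hs
      have hsd : s / M = t' := by
        rw [hs, Nat.add_mul_div_left _ _ hMpos, Nat.div_eq_of_lt i.isLt, Nat.zero_add]
      have hsm : s % M = (i:ℕ) := by
        rw [hs, Nat.add_mul_mod_self_left, Nat.mod_eq_of_lt i.isLt]
      have hspc := Classical.choose_spec (hspec s (seq s))
      rw [← hseq_succ s] at hspc
      have hfin : (⟨s % M, Nat.mod_lt s hMpos⟩ : Fin M) = i := Fin.ext hsm
      rw [hfin] at hspc
      rw [hsd, hsm] at hspc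
      have hloc : F^[t'+1] x (((i:ℕ):ℤ)+1) = F^[t'+1] (seq (s+1)) (((i:ℕ):ℤ)+1) := by
        refine ca_iter_local I f m hmax (t'+1) _ _ _ (fun p hp => ?_)
        refine hxs (s+1) p ?_
        have hdm : ((s:ℕ):ℤ) = ((i:ℕ):ℤ) + ((M:ℕ):ℤ) * ((t':ℕ):ℤ) := by
          rw [hs]; push_cast; ring
        rw [← hM] at hp
        push_cast at hp ⊢
        nlinarith [hp, hdm]
      exact hloc.trans hspc
  -- conclude via factor map
  rw [eq_top_iff]
  calc (⊤:EReal) = coverEntropy (fun (u : ℕ → Fin M → X) n => u (n+1)) Set.univ :=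
        (shift_entropy_top).symm
    _ = coverEntropy (fun (u : ℕ → Fin M → X) n => u (n+1)) (ψ '' Set.univ) := by
        rw [Set.image_univ, Set.range_eq_univ.2 hψsurj]
    _ ≤ coverEntropy F Set.univ := coverEntropy_image_le_of_uniformContinuous hsemi hUC _

end Main


/-- a permutative cellular automaton on `X^ℤ` with `X` infinite compact
metrizable (and nontrivial domain, i.e. `I ≠ {0}`) has infinite topological entropy. -/
theorem ca_permutative_entropy_top {X : Type*} [MetricSpace X] [CompactSpace X] [Infinite X]
    (I : Finset ℤ) (hI : I.Nonempty) (f : (↥I → X) → X) (hf : Continuous f)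
    (hnz : ∃ j ∈ I, j ≠ 0)
    (hperm : ∀ j : ↥I, ((j : ℤ) = I.max' hI ∨ (j : ℤ) = I.min' hI) → (j : ℤ) ≠ 0 →
      ∀ u : ↥I → X, Function.Surjective fun a : X => f (Function.update u j a)) :
    Dynamics.coverEntropy (caMap I f) Set.univ = ⊤ := by
  by_cases hmpos : 0 < I.max' hI
  · exact ca_core I f hf (I.max' hI) (I.max'_mem hI) (fun j hj => I.le_max' j hj) hmpos
      (hperm ⟨I.max' hI, I.max'_mem hI⟩ (Or.inl rfl) hmpos.ne')
  · -- left-permutative case: min' I < 0; conjugate by reflection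
    have hlneg : I.min' hI < 0 := by
      obtain ⟨j0, hj0I, hj0⟩ := hnz
      have h1 : j0 ≤ I.max' hI := I.le_max' j0 hj0I
      have h2 : I.min' hI ≤ j0 := I.min'_le j0 hj0I
      omega
    set l : ℤ := I.min' hI with hl
    have hlI : l ∈ I := I.min'_mem hI
    set R : (ℤ → X) → (ℤ → X) := fun x n => x (-n) with hR
    set I' : Finset ℤ := I.image (fun j => -j) with hI'
    have hmem' : ∀ j : ↥I, -(j:ℤ) ∈ I' := fun j => Finset.mem_image_of_mem _ j.2
    set f' : (↥I' → X) → X := fun u => f (fun j => u ⟨-(j:ℤ), hmem' j⟩) with hf'def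
    have hf'cont : Continuous f' := hf.comp (continuous_pi fun _ => continuous_apply _)
    have hm'I' : -l ∈ I' := hmem' ⟨l, hlI⟩
    have hmax' : ∀ j' ∈ I', j' ≤ -l := by
      intro j' hj'
      rw [hI', Finset.mem_image] at hj'
      obtain ⟨j, hj, rfl⟩ := hj'
      have := I.min'_le j hj
      omega
    have hm'pos : 0 < -l := by omega
    have hsurj' : ∀ u : ↥I' → X,
        Function.Surjective fun a : X => f' (Function.update u ⟨-l, hm'I'⟩ a) := by
      intro u
      have key : ∀ a : X, f' (Function.update u ⟨-l, hm'I'⟩ a)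
          = f (Function.update (fun j : ↥I => u ⟨-(j:ℤ), hmem' j⟩) ⟨l, hlI⟩ a) := by
        intro a
        show f _ = f _
        congr 1
        funext j
        rw [Function.update_apply, Function.update_apply]
        by_cases hj : j = (⟨l, hlI⟩ : ↥I)
        · rw [if_pos hj, if_pos (by rw [hj])]
        · rw [if_neg hj, if_neg]
          intro hc
          apply hj
          apply Subtype.ext
          have : -(j:ℤ) = -l := congrArg Subtype.val hc
          show (j:ℤ) = l
          omega
      simp only [key]
      exact hperm ⟨l, hlI⟩ (Or.inr rfl) hlneg.ne (fun j => u ⟨-(j:ℤ), hmem' j⟩)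
    have hconj : Function.Semiconj R (caMap I f) (caMap I' f') := by
      intro x
      funext n
      show caMap I f x (-n) = f' (fun j' => R x (n + (j':ℤ)))
      rw [hf'def]
      show f _ = f _
      congr 1
      funext j
      show x (-n + (j:ℤ)) = x (-(n + -(j:ℤ)))
      congr 1
      ring
    have h' : Dynamics.coverEntropy (caMap I' f') Set.univ = ⊤ :=
      ca_core I' f' hf'cont (-l) hm'I' hmax' hm'pos hsurj'
    have hRsurj : Function.Surjective R := by
      intro y
      exact ⟨fun n => y (-n), by funext n; show y (- - n) = y n; rw [neg_neg]⟩
    have hRUC : UniformContinuous R :=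
      CompactSpace.uniformContinuous_of_continuous (continuous_pi fun _ => continuous_apply _)
    rw [eq_top_iff]
    calc (⊤:EReal) = Dynamics.coverEntropy (caMap I' f') Set.univ := h'.symm
      _ = Dynamics.coverEntropy (caMap I' f') (R '' Set.univ) := by
          rw [Set.image_univ, Set.range_eq_univ.2 hRsurj]
      _ ≤ Dynamics.coverEntropy (caMap I f) Set.univ :=
          Dynamics.coverEntropy_image_le_of_uniformContinuous hconj hRUC _
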